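/- For every real α > -1 and every integer n ≥ 3, the best Markov constant satisfies c_n(α)⁴ ≤ (n(n+1)/(2(α+1)²(α+3))) · [ n² + (2α²+5α+6)n/(3(α+2)) + (α+1)(α+6)/(3(α+2)) ]. -/

import Mathlib

open MeasureTheory

/-- The weighted `L²` norm with the Laguerre weight `w_α(x) = x^α e^{-x}` on `(0,∞)`. -/
noncomputable def laguerreNorm (α : ℝ) (f : ℝ → ℝ) : ℝ :=
  Real.sqrt (∫ x in Set.Ioi (0 : ℝ), (f x) ^ 2 * (x ^ α * Real.exp (-x)))

/-- The best Markov constant `c_n(α)` in the inequality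
`‖p'‖_{w_α} ≤ c_n(α) ‖p‖_{w_α}` over polynomials of degree at most `n`. -/
noncomputable def markovConst (n : ℕ) (α : ℝ) : ℝ :=
  sSup {r : ℝ | ∃ p : Polynomial ℝ, p ≠ 0 ∧ p.natDegree ≤ n ∧
    r = laguerreNorm α (fun x => (Polynomial.derivative p).eval x) /
        laguerreNorm α (fun x => p.eval x)}

namespace MarkovAux
open Polynomial MeasureTheory

noncomputable def lc (α : ℝ) (n i : ℕ) : ℝ :=
  (-1)^i * Real.Gamma (α + n + 1) /
    (Real.Gamma (α + i + 1) * (Nat.factorial i) * (Nat.factorial (n - i)))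

noncomputable def clc (α : ℝ) (n i : ℕ) : ℝ := if i ≤ n then lc α n i else 0

noncomputable def L (α : ℝ) (n : ℕ) : Polynomial ℝ :=
  ∑ i ∈ Finset.range (n+1), monomial i (lc α n i)

noncomputable def Phi (α : ℝ) : Polynomial ℝ →ₗ[ℝ] ℝ :=
  Polynomial.lsum (fun k => LinearMap.toSpanSingleton ℝ ℝ (Real.Gamma (α + k + 1)))

lemma gamma_arg_pos {α : ℝ} (hα : -1 < α) (x : ℝ) (hx : 0 ≤ x) : (0:ℝ) < α + x + 1 := by
  linarith

lemma gamma_pos {α : ℝ} (hα : -1 < α) (k : ℕ) : 0 < Real.Gamma (α + k + 1) :=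
  Real.Gamma_pos_of_pos (gamma_arg_pos hα k (Nat.cast_nonneg k))

lemma gamma_succ {α : ℝ} (hα : -1 < α) (k : ℕ) :
    Real.Gamma (α + (k+1 : ℕ) + 1) = (α + k + 1) * Real.Gamma (α + k + 1) := by
  have h : (α + ((k+1 : ℕ) : ℝ) + 1) = (α + k + 1) + 1 := by push_cast; ring
  rw [h, Real.Gamma_add_one (ne_of_gt (gamma_arg_pos hα k (Nat.cast_nonneg k)))]

lemma fact_ne (m : ℕ) : ((Nat.factorial m : ℝ)) ≠ 0 :=
  Nat.cast_ne_zero.2 (Nat.factorial_ne_zero m)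

lemma lc_ne_zero {α : ℝ} (hα : -1 < α) (n i : ℕ) : lc α n i ≠ 0 := by
  unfold lc
  exact div_ne_zero (mul_ne_zero (pow_ne_zero _ (by norm_num)) (ne_of_gt (gamma_pos hα n)))
    (mul_ne_zero (mul_ne_zero (ne_of_gt (gamma_pos hα i)) (fact_ne i)) (fact_ne _))

lemma coeff_L (α : ℝ) (n i : ℕ) : (L α n).coeff i = clc α n i := by
  unfold L clc
  rw [finset_sum_coeff]
  simp only [coeff_monomial]
  rw [Finset.sum_ite_eq' (Finset.range (n+1)) i (fun j => lc α n j)]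
  simp [Nat.lt_succ_iff]

lemma id1 {α : ℝ} (hα : -1 < α) (n i : ℕ) :
    ((i:ℝ)+1)*(α+i+1) * clc α n (i+1) = ((i:ℝ) - n) * clc α n i := by
  unfold clc
  rcases lt_trichotomy i n with h | rfl | h
  · obtain ⟨d, rfl⟩ : ∃ d, n = i + d + 1 := ⟨n - i - 1, by omega⟩
    rw [if_pos (by omega), if_pos (by omega)]
    unfold lc
    have e1 : i + d + 1 - (i+1) = d := by omega
    have e2 : i + d + 1 - i = d + 1 := by omega
    rw [e1, e2, gamma_succ hα i]
    have g1 := (gamma_pos hα i).ne'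
    have g2 := (gamma_pos hα (i+d+1)).ne'
    have gp1 : (α + (i:ℝ) + 1) ≠ 0 := (gamma_arg_pos hα i (Nat.cast_nonneg i)).ne'
    have f1 := fact_ne i; have f2 := fact_ne d
    have c1 : ((i:ℝ)+1) ≠ 0 := by positivity
    have c2 : ((d:ℝ)+1) ≠ 0 := by positivity
    push_cast [Nat.factorial_succ, pow_succ]
    field_simp
    ring
  · rw [if_neg (by omega), if_pos le_rfl]
    simp
  · rw [if_neg (by omega), if_neg (by omega)]
    simp

lemma id2 {α : ℝ} (hα : -1 < α) (n i : ℕ) :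
    ((i:ℝ)+1) * clc α (n+1) (i+1) = ((i:ℝ)+1) * clc α n (i+1) - clc α n i := by
  unfold clc
  rcases lt_trichotomy i n with h | rfl | h
  · obtain ⟨d, rfl⟩ : ∃ d, n = i + d + 1 := ⟨n - i - 1, by omega⟩
    rw [if_pos (by omega), if_pos (by omega), if_pos (by omega)]
    unfold lc
    have e1 : i + d + 1 + 1 - (i+1) = d + 1 := by omega
    have e2 : i + d + 1 - (i+1) = d := by omega
    have e3 : i + d + 1 - i = d + 1 := by omega
    rw [e1, e2, e3, gamma_succ hα (i+d+1), gamma_succ hα i]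
    have g1 := (gamma_pos hα i).ne'
    have g2 := (gamma_pos hα (i+d+1)).ne'
    have gp1 : (α + (i:ℝ) + 1) ≠ 0 := (gamma_arg_pos hα i (Nat.cast_nonneg i)).ne'
    have f1 := fact_ne i; have f2 := fact_ne d
    have c1 : ((i:ℝ)+1) ≠ 0 := by positivity
    have c2 : ((d:ℝ)+1) ≠ 0 := by positivity
    push_cast [Nat.factorial_succ, pow_succ]
    field_simp
    ring
  · rw [if_pos (by omega), if_neg (by omega), if_pos le_rfl]
    unfold lc
    have e1 : i + 1 - (i+1) = 0 := by omega
    have e2 : i - i = 0 := by omega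
    rw [e1, e2, gamma_succ hα i]
    have g2 := (gamma_pos hα i).ne'
    have gp1 : (α + (i:ℝ) + 1) ≠ 0 := (gamma_arg_pos hα i (Nat.cast_nonneg i)).ne'
    have f1 := fact_ne i
    have c1 : ((i:ℝ)+1) ≠ 0 := by positivity
    push_cast [Nat.factorial_succ, pow_succ]
    field_simp
    ring
  · rw [if_neg (by omega), if_neg (by omega), if_neg (by omega)]
    simp

lemma id3 {α : ℝ} (hα : -1 < α) (n i : ℕ) :
    ((n:ℝ)+1+α) * clc α n i = ((n:ℝ)+1-i) * clc α (n+1) i := by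
  unfold clc
  rcases le_or_gt i n with h | h
  · obtain ⟨d, rfl⟩ : ∃ d, n = i + d := ⟨n - i, by omega⟩
    rw [if_pos (by omega), if_pos (by omega)]
    unfold lc
    have e1 : i + d - i = d := by omega
    have e2 : i + d + 1 - i = d + 1 := by omega
    rw [e1, e2, gamma_succ hα (i+d)]
    have g1 := (gamma_pos hα i).ne'
    have g2 := (gamma_pos hα (i+d)).ne'
    have f1 := fact_ne i; have f2 := fact_ne d
    have c2 : ((d:ℝ)+1) ≠ 0 := by positivity
    push_cast [Nat.factorial_succ]
    field_simp
    ring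
  · rcases eq_or_lt_of_le (Nat.succ_le_of_lt h) with h2 | h2
    · rw [if_neg (by omega), if_pos (by omega)]
      have hz : ((n:ℝ)+1-i) = 0 := by
        have : i = n + 1 := by omega
        subst this; push_cast; ring
      rw [hz]; ring
    · rw [if_neg (by omega), if_neg (by omega)]
      simp

/-! ### Phi basics -/

lemma Phi_monomial (α : ℝ) (k : ℕ) (a : ℝ) :
    Phi α (monomial k a) = a * Real.Gamma (α + k + 1) := by
  unfold Phi
  rw [Polynomial.lsum_apply, Polynomial.sum_monomial_index]
  · simp [LinearMap.toSpanSingleton_apply, smul_eq_mul]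
  · simp

lemma Phi_C (α : ℝ) (a : ℝ) : Phi α (C a) = a * Real.Gamma (α + 1) := by
  have : (C a : Polynomial ℝ) = monomial 0 a := by simp
  rw [this, Phi_monomial]; norm_num

lemma Phi_C_mul (α : ℝ) (a : ℝ) (p : Polynomial ℝ) :
    Phi α (C a * p) = a * Phi α p := by
  rw [← smul_eq_C_mul, LinearMap.map_smul, smul_eq_mul]

/-! ### Pearson identity -/

lemma pearson {α : ℝ} (hα : -1 < α) (q : Polynomial ℝ) :
    Phi α (X * derivative q + C (α+1) * q - X * q) = 0 := by
  induction q using Polynomial.induction_on' with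
  | add p q hp hq =>
    have h : X * derivative (p + q) + C (α+1) * (p + q) - X * (p + q)
        = (X * derivative p + C (α+1) * p - X * p) + (X * derivative q + C (α+1) * q - X * q) := by
      rw [derivative_add]; ring
    rw [h, map_add, hp, hq]; ring
  | monomial n a =>
    rw [derivative_monomial]
    rcases n with _ | m
    · have h0 : (monomial (0 - 1) (a * ((0:ℕ):ℝ))) = (0 : Polynomial ℝ) := by
        simp
      rw [h0, mul_zero, zero_add, X_mul_monomial, C_mul_monomial, map_sub,
        Phi_monomial, Phi_monomial, gamma_succ hα 0]
      push_cast
      ring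
    · rw [X_mul_monomial]
      have h1 : m + 1 - 1 = m := rfl
      rw [h1, X_mul_monomial, C_mul_monomial, map_sub, map_add,
        Phi_monomial, Phi_monomial, Phi_monomial, gamma_succ hα (m+1)]
      push_cast
      ring

/-! ### Polynomial identities -/

lemma coeff_X_mul_zero' (p : Polynomial ℝ) : (X*p).coeff 0 = 0 := by
  simp [mul_coeff_zero]

lemma ode {α : ℝ} (hα : -1 < α) (n : ℕ) :
    X * derivative (derivative (L α n)) + C (α+1) * derivative (L α n)
      - X * derivative (L α n) = C (-(n:ℝ)) * L α n := by
  ext i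
  rcases i with _ | j
  · simp only [coeff_add, coeff_sub, coeff_C_mul, coeff_X_mul_zero', coeff_derivative, coeff_L]
    push_cast
    linear_combination id1 hα n 0
  · simp only [coeff_add, coeff_sub, coeff_C_mul, coeff_X_mul, coeff_derivative, coeff_L]
    have h := id1 hα n (j+1)
    push_cast at h ⊢
    linear_combination h

lemma deriv_step {α : ℝ} (hα : -1 < α) (n : ℕ) :
    derivative (L α (n+1)) = derivative (L α n) - L α n := by
  ext i
  simp only [coeff_sub, coeff_derivative, coeff_L]
  have h := id2 hα n i
  push_cast at h ⊢
  linear_combination h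

lemma xderiv {α : ℝ} (hα : -1 < α) (n : ℕ) :
    X * derivative (L α (n+1)) = C ((n:ℝ)+1) * L α (n+1) - C ((n:ℝ)+1+α) * L α n := by
  ext i
  rcases i with _ | j
  · simp only [coeff_sub, coeff_C_mul, coeff_X_mul_zero', coeff_L]
    have h := id3 hα n 0
    push_cast at h ⊢
    linear_combination h
  · simp only [coeff_sub, coeff_C_mul, coeff_X_mul, coeff_derivative, coeff_L]
    have h := id3 hα n (j+1)
    push_cast at h ⊢
    linear_combination h

lemma L_zero (α : ℝ) : L α 0 = C (lc α 0 0) := by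
  unfold L
  simp [Finset.sum_range_one]

lemma lc_diag_00 {α : ℝ} (hα : -1 < α) : lc α 0 0 = 1 := by
  have h := (gamma_pos hα 0).ne'
  unfold lc
  simp only [pow_zero, one_mul, Nat.sub_self, Nat.factorial_zero, Nat.cast_one, mul_one]
  exact div_self h

lemma deriv_L_sum {α : ℝ} (hα : -1 < α) (n : ℕ) :
    derivative (L α n) = -∑ k ∈ Finset.range n, L α k := by
  induction n with
  | zero => simp [L_zero, derivative_C]
  | succ m ih =>
    rw [deriv_step hα m, ih, Finset.sum_range_succ]
    ring

/-! ### Orthogonality -/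

lemma phi_sym {α : ℝ} (hα : -1 < α) (f g : Polynomial ℝ) :
    Phi α (f * (X * derivative (derivative g) + C (α+1) * derivative g - X * derivative g))
      = - Phi α (X * derivative f * derivative g) := by
  have key := pearson hα (f * derivative g)
  have expand : X * derivative (f * derivative g) + C (α+1) * (f * derivative g)
      - X * (f * derivative g)
      = X * derivative f * derivative g
        + f * (X * derivative (derivative g) + C (α+1) * derivative g - X * derivative g) := by
    rw [derivative_mul]; ring
  rw [expand, map_add] at key
  linarith

lemma orth {α : ℝ} (hα : -1 < α) {m n : ℕ} (hmn : m ≠ n) :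
    Phi α (L α m * L α n) = 0 := by
  have e1 := phi_sym hα (L α m) (L α n)
  have e2 := phi_sym hα (L α n) (L α m)
  rw [ode hα n] at e1
  rw [ode hα m] at e2
  have c1 : L α m * (C (-(n:ℝ)) * L α n) = C (-(n:ℝ)) * (L α m * L α n) := by ring
  have c2 : L α n * (C (-(m:ℝ)) * L α m) = C (-(m:ℝ)) * (L α m * L α n) := by ring
  rw [c1, Phi_C_mul] at e1
  rw [c2, Phi_C_mul] at e2
  have c3 : X * derivative (L α n) * derivative (L α m)
      = X * derivative (L α m) * derivative (L α n) := by ring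
  rw [c3] at e2
  have hmn' : (m:ℝ) ≠ (n:ℝ) := Nat.cast_injective.ne hmn
  have : (-(n:ℝ)) * Phi α (L α m * L α n) = (-(m:ℝ)) * Phi α (L α m * L α n) := by
    rw [e1, e2]
  have h2 : ((m:ℝ) - n) * Phi α (L α m * L α n) = 0 := by linear_combination this
  exact (mul_eq_zero.1 h2).resolve_left (sub_ne_zero_of_ne hmn')

/-! ### Expansion in the Laguerre basis -/

lemma exists_expansion {α : ℝ} (hα : -1 < α) (m : ℕ) :
    ∀ p : Polynomial ℝ, p.natDegree ≤ m →
      ∃ b : ℕ → ℝ, p = ∑ k ∈ Finset.range (m+1), C (b k) * L α k := by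
  induction m with
  | zero =>
    intro p hp
    refine ⟨fun _ => p.coeff 0, ?_⟩
    rw [Finset.sum_range_one, L_zero, lc_diag_00 hα]
    conv_lhs => rw [Polynomial.eq_C_of_natDegree_le_zero hp]
    simp
  | succ m ih =>
    intro p hp
    set r := p.coeff (m+1) / lc α (m+1) (m+1) with hr
    set q := p - C r * L α (m+1) with hq
    have hqd : q.natDegree ≤ m := by
      rw [natDegree_le_iff_coeff_eq_zero]
      intro N hN
      have hcoef : q.coeff N = p.coeff N - r * clc α (m+1) N := by
        simp [hq, coeff_L]
      rcases Nat.lt_or_ge N (m+2) with h1 | h1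
      · have hN1 : N = m+1 := by omega
        subst hN1
        rw [hcoef]
        unfold clc
        rw [if_pos le_rfl, hr, div_mul_cancel₀ _ (lc_ne_zero hα (m+1) (m+1)), sub_self]
      · rw [hcoef]
        have hpc : p.coeff N = 0 :=
          Polynomial.coeff_eq_zero_of_natDegree_lt (lt_of_le_of_lt hp (by omega))
        have hcc : clc α (m+1) N = 0 := by unfold clc; rw [if_neg (by omega)]
        rw [hpc, hcc, mul_zero, sub_self]
    obtain ⟨b, hb⟩ := ih q hqd
    refine ⟨fun k => if k = m+1 then r else b k, ?_⟩
    rw [Finset.sum_range_succ]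
    have hcongr : ∑ k ∈ Finset.range (m+1), C (if k = m+1 then r else b k) * L α k
        = ∑ k ∈ Finset.range (m+1), C (b k) * L α k := by
      refine Finset.sum_congr rfl ?_
      intro k hk
      rw [if_neg (by simp at hk; omega)]
    rw [hcongr]
    beta_reduce
    rw [if_pos rfl, ← hb, hq]
    ring

/-! ### Norms -/

noncomputable def hn (α : ℝ) (n : ℕ) : ℝ := Phi α (L α n * L α n)

lemma orth' {α : ℝ} (hα : -1 < α) (j k : ℕ) :
    Phi α (L α j * L α k) = if j = k then hn α j else 0 := by
  by_cases h : j = k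
  · subst h; rw [if_pos rfl]; rfl
  · rw [if_neg h, orth hα h]

lemma hn_zero {α : ℝ} (hα : -1 < α) : hn α 0 = Real.Gamma (α + 1) := by
  unfold hn
  rw [L_zero, lc_diag_00 hα, ← C_mul, Phi_C]
  norm_num

lemma orth_lowdeg {α : ℝ} (hα : -1 < α) (m : ℕ) (p : Polynomial ℝ) (hp : p.natDegree ≤ m) :
    Phi α (L α (m+1) * p) = 0 := by
  obtain ⟨b, hb⟩ := exists_expansion hα m p hp
  rw [hb, Finset.mul_sum, map_sum]
  refine Finset.sum_eq_zero ?_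
  intro k hk
  have e : L α (m+1) * (C (b k) * L α k) = C (b k) * (L α (m+1) * L α k) := by ring
  rw [e, Phi_C_mul, orth hα (by simp at hk; omega), mul_zero]

lemma deg_XdL {α : ℝ} (n : ℕ) : (X * derivative (L α n)).natDegree ≤ n := by
  rw [natDegree_le_iff_coeff_eq_zero]
  intro N hN
  rcases N with _ | j
  · exact coeff_X_mul_zero' _
  · rw [coeff_X_mul, coeff_derivative, coeff_L]
    have : clc α n (j+1) = 0 := by unfold clc; rw [if_neg (by omega)]
    rw [this, zero_mul]

lemma hn_rec {α : ℝ} (hα : -1 < α) (n : ℕ) :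
    ((n:ℝ)+1) * hn α (n+1) = ((n:ℝ)+1+α) * hn α n := by
  -- step A : Phi (X * L n * L (n+1)) = -(n+1) * hn (n+1)
  set s : Polynomial ℝ := X * L α n + C ((n:ℝ)+1) * L α (n+1) with hs
  have hsd : s.natDegree ≤ n := by
    rw [natDegree_le_iff_coeff_eq_zero]
    intro N hN
    rcases Nat.lt_or_ge N (n+2) with h1 | h1
    · have hNn : N = n + 1 := by omega
      subst hNn
      rw [hs, coeff_add, coeff_X_mul, coeff_C_mul, coeff_L, coeff_L]
      have h := id2 hα n n
      have hz : clc α n (n+1) = 0 := by unfold clc; rw [if_neg (by omega)]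
      rw [hz] at h
      push_cast at h ⊢
      linear_combination h
    · rcases N with _ | j
      · omega
      · rw [hs, coeff_add, coeff_X_mul, coeff_C_mul, coeff_L, coeff_L]
        have hz1 : clc α n j = 0 := by unfold clc; rw [if_neg (by omega)]
        have hz2 : clc α (n+1) (j+1) = 0 := by unfold clc; rw [if_neg (by omega)]
        rw [hz1, hz2]
        ring
  have stepA : Phi α (X * L α n * L α (n+1)) = -(((n:ℝ)+1) * hn α (n+1)) := by
    have e : X * L α n * L α (n+1)
        = L α (n+1) * s - C ((n:ℝ)+1) * (L α (n+1) * L α (n+1)) := by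
      rw [hs]; ring
    rw [e, map_sub, orth_lowdeg hα n s hsd, Phi_C_mul]
    unfold hn
    ring
  -- step B via Pearson
  have P := pearson hα (L α n * L α (n+1))
  have final : X * derivative (L α n * L α (n+1)) + C (α+1) * (L α n * L α (n+1))
      - X * (L α n * L α (n+1))
      = L α (n+1) * (X * derivative (L α n))
        + C ((n:ℝ)+1) * (L α n * L α (n+1))
        - C ((n:ℝ)+1+α) * (L α n * L α n)
        + C (α+1) * (L α n * L α (n+1))
        - X * L α n * L α (n+1) := by
    rw [derivative_mul]
    linear_combination (L α n) * (xderiv hα n)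
  rw [final, map_sub, map_add, map_sub, map_add, Phi_C_mul, Phi_C_mul, Phi_C_mul,
    orth_lowdeg hα n _ (deg_XdL n), orth hα (show n ≠ n+1 by omega), stepA] at P
  unfold hn at P ⊢
  linarith

lemma hn_pos {α : ℝ} (hα : -1 < α) (n : ℕ) : 0 < hn α n := by
  induction n with
  | zero => rw [hn_zero hα]; exact Real.Gamma_pos_of_pos (by linarith)
  | succ m ih =>
    have hrec := hn_rec hα m
    have h1 : (0:ℝ) < (m:ℝ) + 1 := by positivity
    have h2 : (0:ℝ) < (m:ℝ) + 1 + α := by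
      have : (0:ℝ) ≤ m := Nat.cast_nonneg m
      linarith
    nlinarith

/-! ### Quadratic forms -/

lemma Phi_bilinear (α : ℝ) (N : ℕ) (b c : ℕ → ℝ) (u v : ℕ → Polynomial ℝ) :
    Phi α ((∑ j ∈ Finset.range N, C (b j) * u j) * (∑ k ∈ Finset.range N, C (c k) * v k))
      = ∑ j ∈ Finset.range N, ∑ k ∈ Finset.range N, b j * c k * Phi α (u j * v k) := by
  rw [Finset.sum_mul_sum, map_sum]
  refine Finset.sum_congr rfl ?_
  intro j _
  rw [map_sum]
  refine Finset.sum_congr rfl ?_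
  intro k _
  have e : (C (b j) * u j) * (C (c k) * v k) = C (b j) * (C (c k) * (u j * v k)) := by ring
  rw [e, Phi_C_mul, Phi_C_mul]
  ring

lemma Phi_sq {α : ℝ} (hα : -1 < α) (N : ℕ) (b : ℕ → ℝ) (p : Polynomial ℝ)
    (hb : p = ∑ k ∈ Finset.range N, C (b k) * L α k) :
    Phi α (p * p) = ∑ k ∈ Finset.range N, (b k)^2 * hn α k := by
  rw [hb, Phi_bilinear]
  refine Finset.sum_congr rfl ?_
  intro j hj
  have step : ∀ k, b j * b k * Phi α (L α j * L α k)
      = if j = k then b j * b k * hn α j else 0 := by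
    intro k
    rw [orth' hα j k]
    split_ifs with h
    · ring
    · ring
  rw [Finset.sum_congr rfl (fun k _ => step k), Finset.sum_ite_eq, if_pos hj]
  ring

lemma deriv_expand {α : ℝ} (N : ℕ) (b : ℕ → ℝ) (p : Polynomial ℝ)
    (hb : p = ∑ k ∈ Finset.range N, C (b k) * L α k) :
    derivative p = ∑ k ∈ Finset.range N, C (b k) * derivative (L α k) := by
  rw [hb, map_sum]
  exact Finset.sum_congr rfl fun k _ => derivative_C_mul _ _

lemma Phi_deriv_sq {α : ℝ} (N : ℕ) (b : ℕ → ℝ) (p : Polynomial ℝ)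
    (hb : p = ∑ k ∈ Finset.range N, C (b k) * L α k) :
    Phi α (derivative p * derivative p)
      = ∑ j ∈ Finset.range N, ∑ k ∈ Finset.range N,
          b j * b k * Phi α (derivative (L α j) * derivative (L α k)) := by
  rw [deriv_expand N b p hb, Phi_bilinear]

lemma G_eq {α : ℝ} (hα : -1 < α) (j k : ℕ) :
    Phi α (derivative (L α j) * derivative (L α k))
      = ∑ i ∈ Finset.range (min j k), hn α i := by
  rw [deriv_L_sum hα j, deriv_L_sum hα k, neg_mul_neg, Finset.sum_mul_sum, map_sum]
  have inner : ∀ a ∈ Finset.range j,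
      Phi α (∑ c ∈ Finset.range k, L α a * L α c) = if a < k then hn α a else 0 := by
    intro a _
    rw [map_sum, Finset.sum_congr rfl (fun c _ => orth' hα a c), Finset.sum_ite_eq]
    simp [Finset.mem_range]
  rw [Finset.sum_congr rfl inner, ← Finset.sum_filter]
  congr 1
  ext a
  simp [Finset.mem_filter, Finset.mem_range, Nat.lt_min]

lemma Phi_sq_pos {α : ℝ} (hα : -1 < α) (N : ℕ) (b : ℕ → ℝ) (p : Polynomial ℝ)
    (hb : p = ∑ k ∈ Finset.range N, C (b k) * L α k) (hp : p ≠ 0) :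
    0 < Phi α (p * p) := by
  rw [Phi_sq hα N b p hb]
  have hterm : ∀ k ∈ Finset.range N, 0 ≤ (b k)^2 * hn α k := fun k _ =>
    mul_nonneg (sq_nonneg _) (hn_pos hα k).le
  rcases (Finset.sum_nonneg hterm).lt_or_eq with h | h
  · exact h
  · exfalso
    apply hp
    rw [hb]
    refine Finset.sum_eq_zero ?_
    intro k hk
    have hk0 : (b k)^2 * hn α k = 0 :=
      (Finset.sum_eq_zero_iff_of_nonneg hterm).1 h.symm k hk
    have : b k = 0 := by
      have := (hn_pos hα k).ne'
      have hsq : (b k)^2 = 0 := by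
        rcases mul_eq_zero.1 hk0 with h' | h'
        · exact h'
        · exact absurd h' this
      exact pow_eq_zero_iff (by norm_num) |>.1 hsq
    rw [this]
    simp

/-! ### Discrete Cauchy-Schwarz -/

lemma discrete_CS {α : ℝ} (hα : -1 < α) (N : ℕ) (b : ℕ → ℝ) (Gd : ℕ → ℕ → ℝ) :
    (∑ j ∈ Finset.range N, ∑ k ∈ Finset.range N, b j * b k * Gd j k)^2
      ≤ (∑ j ∈ Finset.range N, ∑ k ∈ Finset.range N, (Gd j k)^2/(hn α j * hn α k))
        * (∑ k ∈ Finset.range N, (b k)^2 * hn α k)^2 := by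
  set u : ℕ → ℝ := fun k => b k * Real.sqrt (hn α k) with hu
  set M : ℕ → ℕ → ℝ := fun j k => Gd j k / (Real.sqrt (hn α j) * Real.sqrt (hn α k)) with hM
  have hsqrt : ∀ k, Real.sqrt (hn α k) ^ 2 = hn α k := fun k => Real.sq_sqrt (hn_pos hα k).le
  have hsqrt_pos : ∀ k, 0 < Real.sqrt (hn α k) := fun k => Real.sqrt_pos.2 (hn_pos hα k)
  have hterm : ∀ j k, b j * b k * Gd j k = u j * (M j k * u k) := by
    intro j k
    rw [hu, hM]
    field_simp [(hsqrt_pos j).ne', (hsqrt_pos k).ne']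
  have husq : ∀ k, u k ^ 2 = (b k)^2 * hn α k := by
    intro k
    rw [hu]
    calc (b k * Real.sqrt (hn α k))^2 = (b k)^2 * (Real.sqrt (hn α k))^2 := by ring
    _ = (b k)^2 * hn α k := by rw [hsqrt]
  have hMsq : ∀ j k, (M j k)^2 = (Gd j k)^2 / (hn α j * hn α k) := by
    intro j k
    rw [hM]
    rw [div_pow, mul_pow, hsqrt, hsqrt]
  -- rewrite the three sums
  have e1 : ∑ j ∈ Finset.range N, ∑ k ∈ Finset.range N, b j * b k * Gd j k
      = ∑ j ∈ Finset.range N, u j * (∑ k ∈ Finset.range N, M j k * u k) := by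
    refine Finset.sum_congr rfl ?_
    intro j _
    rw [Finset.mul_sum]
    exact Finset.sum_congr rfl fun k _ => hterm j k
  have e2 : ∑ k ∈ Finset.range N, (b k)^2 * hn α k = ∑ k ∈ Finset.range N, u k ^ 2 :=
    (Finset.sum_congr rfl fun k _ => (husq k)).symm
  have e3 : ∑ j ∈ Finset.range N, ∑ k ∈ Finset.range N, (Gd j k)^2/(hn α j * hn α k)
      = ∑ j ∈ Finset.range N, ∑ k ∈ Finset.range N, (M j k)^2 := by
    refine Finset.sum_congr rfl fun j _ => Finset.sum_congr rfl fun k _ => (hMsq j k).symm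
  rw [e1, e2, e3]
  set U := ∑ k ∈ Finset.range N, u k ^ 2 with hU
  have hU0 : 0 ≤ U := Finset.sum_nonneg fun k _ => sq_nonneg _
  -- first CS
  have cs1 : (∑ j ∈ Finset.range N, u j * (∑ k ∈ Finset.range N, M j k * u k))^2
      ≤ U * ∑ j ∈ Finset.range N, (∑ k ∈ Finset.range N, M j k * u k)^2 :=
    Finset.sum_mul_sq_le_sq_mul_sq _ _ _
  -- second CS, per row
  have cs2 : ∀ j, (∑ k ∈ Finset.range N, M j k * u k)^2
      ≤ (∑ k ∈ Finset.range N, (M j k)^2) * U :=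
    fun j => Finset.sum_mul_sq_le_sq_mul_sq _ _ _
  have step : ∑ j ∈ Finset.range N, (∑ k ∈ Finset.range N, M j k * u k)^2
      ≤ (∑ j ∈ Finset.range N, ∑ k ∈ Finset.range N, (M j k)^2) * U := by
    rw [Finset.sum_mul]
    exact Finset.sum_le_sum fun j _ => cs2 j
  calc (∑ j ∈ Finset.range N, u j * (∑ k ∈ Finset.range N, M j k * u k))^2
      ≤ U * ∑ j ∈ Finset.range N, (∑ k ∈ Finset.range N, M j k * u k)^2 := cs1
    _ ≤ U * ((∑ j ∈ Finset.range N, ∑ k ∈ Finset.range N, (M j k)^2) * U) :=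
        mul_le_mul_of_nonneg_left step hU0
    _ = (∑ j ∈ Finset.range N, ∑ k ∈ Finset.range N, (M j k)^2) * U^2 := by ring

/-! ### Summation identities -/

lemma hsum' {α : ℝ} (hα : -1 < α) (k : ℕ) :
    (α+1) * ∑ i ∈ Finset.range k, hn α i = (k:ℝ) * hn α k := by
  induction k with
  | zero => simp
  | succ m ih =>
    rw [Finset.sum_range_succ]
    have hr := hn_rec hα m
    push_cast
    linear_combination ih - hr

lemma wsum' {α : ℝ} (hα : -1 < α) (k : ℕ) :
    ((α+2)*(α+3)) * ∑ i ∈ Finset.range k, (i:ℝ)^2 * hn α i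
      = (k:ℝ)*((k:ℝ)-1)*((α+2)*k-(α+1)) * hn α k := by
  induction k with
  | zero => simp
  | succ m ih =>
    rw [Finset.sum_range_succ]
    have hr := hn_rec hα m
    have hm1 : ((m:ℝ)+1) ≠ 0 := by positivity
    have H : ((m:ℝ)+1) * (((α+2)*(α+3)) * ((∑ i ∈ Finset.range m, (i:ℝ)^2 * hn α i) + (m:ℝ)^2 * hn α m))
        = ((m:ℝ)+1) * (((m:ℝ)+1)*(((m:ℝ)+1)-1)*((α+2)*((m:ℝ)+1)-(α+1)) * hn α (m+1)) := by
      linear_combination ((m:ℝ)+1) * ih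
        - (((m:ℝ)+1)*(m:ℝ)*((α+2)*((m:ℝ)+1)-(α+1))) * hr
    have := mul_left_cancel₀ hm1 H
    push_cast
    linear_combination this

/-! ### Trace computation -/

lemma sum_sym_split (N : ℕ) (F : ℕ → ℕ → ℝ) (hF : ∀ j k, F j k = F k j) :
    ∑ j ∈ Finset.range N, ∑ k ∈ Finset.range N, F j k
      = ∑ j ∈ Finset.range N, F j j
        + 2 * ∑ j ∈ Finset.range N, ∑ k ∈ Finset.range j, F j k := by
  induction N with
  | zero => simp
  | succ m ih =>
    rw [Finset.sum_range_succ (fun j => ∑ k ∈ Finset.range (m+1), F j k),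
      Finset.sum_congr rfl (fun j (_ : j ∈ Finset.range m) => Finset.sum_range_succ (F j) m),
      Finset.sum_add_distrib, ih,
      Finset.sum_range_succ (fun j => F j j),
      Finset.sum_range_succ (fun j => ∑ k ∈ Finset.range j, F j k),
      Finset.sum_range_succ (F m) m,
      Finset.sum_congr rfl (fun j (_ : j ∈ Finset.range m) => hF j m)]
    ring

noncomputable def Gd (α : ℝ) (j k : ℕ) : ℝ := ∑ i ∈ Finset.range (min j k), hn α i

lemma Gd_symm (α : ℝ) (j k : ℕ) : Gd α j k = Gd α k j := by
  unfold Gd; rw [min_comm]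

lemma Gd_diag {α : ℝ} (hα : -1 < α) (j : ℕ) : (α+1) * Gd α j j = (j:ℝ) * hn α j := by
  unfold Gd
  rw [min_self]
  exact hsum' hα j

lemma Gd_lower {α : ℝ} (hα : -1 < α) {j k : ℕ} (hkj : k ≤ j) :
    (α+1) * Gd α j k = (k:ℝ) * hn α k := by
  unfold Gd
  rw [min_eq_right hkj]
  exact hsum' hα k

lemma trace_eq {α : ℝ} (hα : -1 < α) (N : ℕ) :
    ∑ j ∈ Finset.range N, ∑ k ∈ Finset.range N, (Gd α j k)^2/(hn α j * hn α k)
      = (1/(α+1)^2) * ∑ j ∈ Finset.range N,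
          ((j:ℝ)^2 + 2 * ((j:ℝ)*((j:ℝ)-1)*((α+2)*(j:ℝ)-(α+1)))/((α+2)*(α+3))) := by
  have hα1 : (α+1) ≠ 0 := by linarith
  have hα2 : (α+2) ≠ 0 := by linarith
  have hα3 : (α+3) ≠ 0 := by linarith
  rw [sum_sym_split N _ (fun j k => by rw [Gd_symm, mul_comm (hn α j)])]
  have diag : ∀ j, (Gd α j j)^2/(hn α j * hn α j) = (j:ℝ)^2/(α+1)^2 := by
    intro j
    have h1 := Gd_diag hα j
    have h2 := (hn_pos hα j).ne'
    have e : Gd α j j = (j:ℝ) * hn α j / (α+1) := by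
      field_simp
      linarith [h1]
    rw [e]
    field_simp
  have offd : ∀ j, ∑ k ∈ Finset.range j, (Gd α j k)^2/(hn α j * hn α k)
      = ((j:ℝ)*((j:ℝ)-1)*((α+2)*(j:ℝ)-(α+1)))/((α+2)*(α+3)*(α+1)^2) := by
    intro j
    have hw := wsum' hα j
    have hj := (hn_pos hα j).ne'
    have step : ∀ k ∈ Finset.range j, (Gd α j k)^2/(hn α j * hn α k)
        = (1/((α+1)^2 * hn α j)) * ((k:ℝ)^2 * hn α k) := by
      intro k hk
      have hkj : k ≤ j := le_of_lt (Finset.mem_range.1 hk)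
      have h1 := Gd_lower hα hkj
      have h2 := (hn_pos hα k).ne'
      have e : Gd α j k = (k:ℝ) * hn α k / (α+1) := by
        field_simp
        linarith [h1]
      rw [e]
      field_simp
    rw [Finset.sum_congr rfl step, ← Finset.mul_sum]
    have hsum := wsum' hα j
    have e2 : ∑ i ∈ Finset.range j, (i:ℝ)^2 * hn α i
        = (j:ℝ)*((j:ℝ)-1)*((α+2)*(j:ℝ)-(α+1)) * hn α j / ((α+2)*(α+3)) := by
      field_simp
      linarith [hsum]
    rw [e2]
    field_simp
  rw [Finset.sum_congr rfl (fun j _ => diag j),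
    Finset.sum_congr rfl (fun j _ => offd j), Finset.mul_sum]
  rw [← Finset.sum_add_distrib, Finset.mul_sum]
  refine Finset.sum_congr rfl ?_
  intro j _
  field_simp

lemma final_sum {α : ℝ} (hα : -1 < α) (n : ℕ) :
    ∑ j ∈ Finset.range (n+1),
        ((j:ℝ)^2 + 2 * ((j:ℝ)*((j:ℝ)-1)*((α+2)*(j:ℝ)-(α+1)))/((α+2)*(α+3)))
      = (α+1)^2 * ((n:ℝ) * ((n:ℝ) + 1) / (2 * (α + 1) ^ 2 * (α + 3)) *
          ((n:ℝ) ^ 2 + (2 * α ^ 2 + 5 * α + 6) * (n:ℝ) / (3 * (α + 2)) +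
            (α + 1) * (α + 6) / (3 * (α + 2)))) := by
  have hα1 : (α+1) ≠ 0 := by linarith
  have hα2 : (α+2) ≠ 0 := by linarith
  have hα3 : (α+3) ≠ 0 := by linarith
  induction n with
  | zero =>
    norm_num
  | succ m ih =>
    rw [Finset.sum_range_succ, ih]
    push_cast
    field_simp
    ring

/-! ### Integral bridge -/

lemma eqon_term {α : ℝ} (k : ℕ) :
    Set.EqOn (fun x : ℝ => Real.exp (-x) * x ^ (α + (k:ℝ) + 1 - 1))
      (fun x : ℝ => x ^ k * (x ^ α * Real.exp (-x))) (Set.Ioi 0) := by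
  intro x hx
  have hx0 : (0:ℝ) < x := hx
  simp only
  rw [show α + (k:ℝ) + 1 - 1 = α + (k:ℝ) by ring, Real.rpow_add hx0,
    Real.rpow_natCast]
  ring

lemma integrable_term {α : ℝ} (hα : -1 < α) (k : ℕ) :
    IntegrableOn (fun x : ℝ => x ^ k * (x ^ α * Real.exp (-x))) (Set.Ioi 0) := by
  have hs : (0:ℝ) < α + (k:ℝ) + 1 := gamma_arg_pos hα k (Nat.cast_nonneg k)
  exact (Real.GammaIntegral_convergent hs).congr_fun (eqon_term k) measurableSet_Ioi

lemma integral_term {α : ℝ} (hα : -1 < α) (k : ℕ) :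
    ∫ x in Set.Ioi (0:ℝ), x ^ k * (x ^ α * Real.exp (-x)) = Real.Gamma (α + k + 1) := by
  have hs : (0:ℝ) < α + (k:ℝ) + 1 := gamma_arg_pos hα k (Nat.cast_nonneg k)
  rw [← MeasureTheory.setIntegral_congr_fun measurableSet_Ioi (eqon_term (α := α) k)]
  exact (Real.Gamma_eq_integral hs).symm

lemma Phi_eq_sum_range (α : ℝ) (p : Polynomial ℝ) :
    Phi α p = ∑ i ∈ Finset.range (p.natDegree + 1), p.coeff i * Real.Gamma (α + i + 1) := by
  conv_lhs => rw [p.as_sum_range' (p.natDegree + 1) (Nat.lt_succ_self _), map_sum]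
  exact Finset.sum_congr rfl fun i _ => Phi_monomial α i (p.coeff i)

lemma integrable_poly {α : ℝ} (hα : -1 < α) (p : Polynomial ℝ) :
    IntegrableOn (fun x : ℝ => p.eval x * (x ^ α * Real.exp (-x))) (Set.Ioi 0) := by
  have e : ∀ x : ℝ, p.eval x * (x ^ α * Real.exp (-x))
      = ∑ i ∈ Finset.range (p.natDegree + 1), p.coeff i * (x ^ i * (x ^ α * Real.exp (-x))) := by
    intro x
    rw [Polynomial.eval_eq_sum_range, Finset.sum_mul]
    exact Finset.sum_congr rfl fun i _ => by ring
  have : (fun x : ℝ => p.eval x * (x ^ α * Real.exp (-x)))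
      = fun x => ∑ i ∈ Finset.range (p.natDegree + 1),
          p.coeff i * (x ^ i * (x ^ α * Real.exp (-x))) := funext e
  rw [this]
  exact MeasureTheory.integrable_finset_sum _
    (fun i _ => ((integrable_term hα i)).const_mul _)

lemma integral_poly {α : ℝ} (hα : -1 < α) (p : Polynomial ℝ) :
    ∫ x in Set.Ioi (0:ℝ), p.eval x * (x ^ α * Real.exp (-x)) = Phi α p := by
  have e : ∀ x : ℝ, p.eval x * (x ^ α * Real.exp (-x))
      = ∑ i ∈ Finset.range (p.natDegree + 1), p.coeff i * (x ^ i * (x ^ α * Real.exp (-x))) := by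
    intro x
    rw [Polynomial.eval_eq_sum_range, Finset.sum_mul]
    exact Finset.sum_congr rfl fun i _ => by ring
  rw [MeasureTheory.setIntegral_congr_fun measurableSet_Ioi (fun x _ => e x),
    MeasureTheory.integral_finset_sum _ (fun i _ => ((integrable_term hα i)).const_mul _),
    Phi_eq_sum_range]
  refine Finset.sum_congr rfl fun i _ => ?_
  rw [MeasureTheory.integral_const_mul, integral_term hα i]

lemma norm_eq_sqrt_Phi {α : ℝ} (hα : -1 < α) (q : Polynomial ℝ) :
    laguerreNorm α (fun x => q.eval x) = Real.sqrt (Phi α (q * q)) := by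
  unfold laguerreNorm
  congr 1
  rw [← integral_poly hα (q * q)]
  refine MeasureTheory.setIntegral_congr_fun measurableSet_Ioi (fun x _ => ?_)
  simp only [Polynomial.eval_mul]
  ring

lemma Phi_sq_nonneg_int {α : ℝ} (hα : -1 < α) (q : Polynomial ℝ) :
    0 ≤ Phi α (q * q) := by
  rw [← integral_poly hα (q * q)]
  refine MeasureTheory.setIntegral_nonneg measurableSet_Ioi (fun x hx => ?_)
  have hx0 : (0:ℝ) < x := hx
  rw [Polynomial.eval_mul]
  have h1 : 0 ≤ q.eval x * q.eval x := mul_self_nonneg _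
  have h2 : 0 ≤ x ^ α * Real.exp (-x) :=
    mul_nonneg (Real.rpow_nonneg hx0.le α) (Real.exp_nonneg _)
  exact mul_nonneg h1 h2

lemma laguerreNorm_nonneg (α : ℝ) (f : ℝ → ℝ) : 0 ≤ laguerreNorm α f := by
  unfold laguerreNorm; exact Real.sqrt_nonneg _

end MarkovAux


open MarkovAux

theorem markov_frobenius_upper (α : ℝ) (hα : -1 < α) (n : ℕ) (hn : 3 ≤ n) :
    (markovConst n α) ^ 4 ≤
      n * (n + 1) / (2 * (α + 1) ^ 2 * (α + 3)) *
        (n ^ 2 + (2 * α ^ 2 + 5 * α + 6) * n / (3 * (α + 2)) +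
          (α + 1) * (α + 6) / (3 * (α + 2))) := by
  classical
  set T : ℝ := ↑n * (↑n + 1) / (2 * (α + 1) ^ 2 * (α + 3)) *
        (↑n ^ 2 + (2 * α ^ 2 + 5 * α + 6) * ↑n / (3 * (α + 2)) +
          (α + 1) * (α + 6) / (3 * (α + 2))) with hT
  have hα1 : (α+1) ≠ 0 := by linarith
  have hTrace : ∑ j ∈ Finset.range (n+1), ∑ k ∈ Finset.range (n+1),
      (Gd α j k)^2/(MarkovAux.hn α j * MarkovAux.hn α k) = T := by
    rw [MarkovAux.trace_eq hα (n+1), MarkovAux.final_sum hα n, hT]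
    field_simp
  have hT0 : 0 ≤ T := by
    rw [← hTrace]
    refine Finset.sum_nonneg fun j _ => Finset.sum_nonneg fun k _ => ?_
    have h1 := (hn_pos hα j).le
    have h2 := (hn_pos hα k).le
    positivity
  set B := Real.sqrt (Real.sqrt T) with hB
  have hB0 : 0 ≤ B := Real.sqrt_nonneg _
  have hB4 : B^4 = T := by
    rw [hB]
    have h1 : Real.sqrt (Real.sqrt T) ^ 4 = (Real.sqrt (Real.sqrt T)^2)^2 := by ring
    rw [h1, Real.sq_sqrt (Real.sqrt_nonneg T), Real.sq_sqrt hT0]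
  have hElem : ∀ r ∈ {r : ℝ | ∃ p : Polynomial ℝ, p ≠ 0 ∧ p.natDegree ≤ n ∧
      r = laguerreNorm α (fun x => (Polynomial.derivative p).eval x) /
          laguerreNorm α (fun x => p.eval x)}, 0 ≤ r ∧ r ≤ B := by
    rintro r ⟨p, hp0, hpd, rfl⟩
    refine ⟨div_nonneg (laguerreNorm_nonneg _ _) (laguerreNorm_nonneg _ _), ?_⟩
    obtain ⟨b, hb⟩ := exists_expansion hα n p hpd
    set D := MarkovAux.Phi α (p*p) with hDdef
    set Nv := MarkovAux.Phi α (Polynomial.derivative p * Polynomial.derivative p) with hNdef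
    have hD : 0 < D := Phi_sq_pos hα (n+1) b p hb hp0
    have hNv : 0 ≤ Nv := Phi_sq_nonneg_int hα _
    have hD' : D = ∑ k ∈ Finset.range (n+1), (b k)^2 * MarkovAux.hn α k :=
      Phi_sq hα (n+1) b p hb
    have hNv' : Nv = ∑ j ∈ Finset.range (n+1), ∑ k ∈ Finset.range (n+1),
        b j * b k * Gd α j k := by
      rw [hNdef, Phi_deriv_sq (n+1) b p hb]
      refine Finset.sum_congr rfl fun j _ => Finset.sum_congr rfl fun k _ => ?_
      rw [G_eq hα j k]
      rfl
    have key : Nv^2 ≤ T * D^2 := by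
      rw [hNv', hD', ← hTrace]
      exact discrete_CS hα (n+1) b (Gd α)
    have hr : laguerreNorm α (fun x => (Polynomial.derivative p).eval x)
          / laguerreNorm α (fun x => p.eval x)
        = Real.sqrt Nv / Real.sqrt D := by
      rw [norm_eq_sqrt_Phi hα (Polynomial.derivative p), norm_eq_sqrt_Phi hα p]
    rw [hr]
    have h4 : (Real.sqrt Nv / Real.sqrt D)^4 ≤ B^4 := by
      rw [hB4]
      have e : (Real.sqrt Nv / Real.sqrt D)^4 = Nv^2 / D^2 := by
        rw [div_pow]
        congr 1
        · calc Real.sqrt Nv ^4 = (Real.sqrt Nv^2)^2 := by ring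
          _ = Nv^2 := by rw [Real.sq_sqrt hNv]
        · calc Real.sqrt D ^4 = (Real.sqrt D^2)^2 := by ring
          _ = D^2 := by rw [Real.sq_sqrt hD.le]
      rw [e, div_le_iff₀ (by positivity : (0:ℝ) < D^2)]
      exact key
    exact (pow_le_pow_iff_left₀
      (div_nonneg (Real.sqrt_nonneg _) (Real.sqrt_nonneg _)) hB0 (by norm_num)).1 h4
  have hsup_le : markovConst n α ≤ B :=
    Real.sSup_le (fun r hr => (hElem r hr).2) hB0
  have hsup_0 : 0 ≤ markovConst n α :=
    Real.sSup_nonneg (fun r hr => (hElem r hr).1)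
  calc (markovConst n α)^4 ≤ B^4 := pow_le_pow_left₀ hsup_0 hsup_le 4
  _ = T := hB4
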